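/- Let G = (V, E) be a finite simple claw-free graph and let C ⊆ V induce a cycle of even length 2k with k > 2. Let a₀ ∈ C and let b₀, b₁ be the two neighbors of a₀ within C. Let s ∉ C be a vertex whose neighbors in C are exactly {b₀, a₀, b₁}, and let t ∉ C ∪ {s} be a vertex adjacent to at least one of s and a₀ and adjacent to both b₀ and b₁. Then t is adjacent to both s and a₀. (Corollary 5.) -/
import Mathlib


open scoped Classical

universe u

/-- `G` is claw-free: no vertex has three pairwise distinct, pairwise non-adjacent neighbors. -/
def ClawFree {V : Type u} (G : SimpleGraph V) : Prop :=
  ¬ ∃ c x y z : V, x ≠ y ∧ x ≠ z ∧ y ≠ z ∧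
    G.Adj c x ∧ G.Adj c y ∧ G.Adj c z ∧ ¬ G.Adj x y ∧ ¬ G.Adj x z ∧ ¬ G.Adj y z

/-- `C` induces a cycle of length at least 4 in `G`: it has at least four vertices, the
induced subgraph is connected, and every vertex of `C` has exactly two neighbors in `C`. -/
def IsHole {V : Type u} [DecidableEq V] (G : SimpleGraph V) (C : Finset V) : Prop :=
  4 ≤ C.card ∧ (G.induce (C : Set V)).Connected ∧
    ∀ v ∈ C, (C.filter fun u => G.Adj v u).card = 2

lemma hole_walk_closure {V : Type u} [DecidableEq V] (G : SimpleGraph V) (C : Finset V)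
    (hconn : (G.induce (C : Set V)).Connected)
    (S : Finset V) (hcl : ∀ v ∈ S, ∀ u ∈ C, G.Adj v u → u ∈ S)
    (y : V) (hyC : y ∈ C) (hyS : y ∈ S) : C ⊆ S := by
  have key : ∀ {u v : (C : Set V)}, (G.induce (C : Set V)).Walk u v →
      (u : V) ∈ S → (v : V) ∈ S := by
    intro u v w
    induction w with
    | nil => exact id
    | @cons a b c h p ih =>
      intro ha
      exact ih (hcl _ ha _ (Finset.mem_coe.mp b.2) h)
  intro x hx
  obtain ⟨w⟩ := hconn.preconnected ⟨y, hyC⟩ ⟨x, hx⟩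
  exact key w hyS

lemma card3_le {V : Type u} [DecidableEq V] (a b c : V) :
    ({a, b, c} : Finset V).card ≤ 3 := by
  refine (Finset.card_insert_le _ _).trans (Nat.succ_le_succ ?_)
  refine (Finset.card_insert_le _ _).trans (Nat.succ_le_succ ?_)
  simp

lemma card4_le {V : Type u} [DecidableEq V] (a b c d : V) :
    ({a, b, c, d} : Finset V).card ≤ 4 := by
  refine (Finset.card_insert_le _ _).trans (Nat.succ_le_succ ?_)
  exact card3_le b c d

lemma card5_le {V : Type u} [DecidableEq V] (a b c d e : V) :
    ({a, b, c, d, e} : Finset V).card ≤ 5 := by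
  refine (Finset.card_insert_le _ _).trans (Nat.succ_le_succ ?_)
  exact card4_le b c d e

set_option maxHeartbeats 1000000 in
/-- Corollary 5: let `C` induce a cycle of even length `2k` with `k > 2` in a claw-free graph,
let `b₀, a₀, b₁` be consecutive vertices of `C`, let `s ∉ C` have neighbors in `C` exactly
`{b₀, a₀, b₁}`, and let `t ∉ C ∪ {s}` be adjacent to at least one of `s` and `a₀` and to both
of `b₀` and `b₁`.  Then `t` is adjacent to both `s` and `a₀`. -/
theorem clone_neighbor_both {V : Type u} [Fintype V] [DecidableEq V]
    (G : SimpleGraph V) (hcf : ClawFree G) (C : Finset V) (k : ℕ)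
    (hC : IsHole G C) (hcard : C.card = 2 * k) (hk : 2 < k)
    (a₀ b₀ b₁ : V) (ha₀ : a₀ ∈ C) (hb₀ : b₀ ∈ C) (hb₁ : b₁ ∈ C) (hbne : b₀ ≠ b₁)
    (hab₀ : G.Adj a₀ b₀) (hab₁ : G.Adj a₀ b₁)
    (s : V) (hs : s ∉ C) (hsnbr : C.filter (fun w => G.Adj s w) = {b₀, a₀, b₁})
    (t : V) (ht : t ∉ C) (hts : t ≠ s)
    (hsome : G.Adj t s ∨ G.Adj t a₀) (htb₀ : G.Adj t b₀) (htb₁ : G.Adj t b₁) :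
    G.Adj t s ∧ G.Adj t a₀ := by
  classical
  obtain ⟨hcard4, hconn, hdeg⟩ := hC
  have hC6 : 6 ≤ C.card := by omega
  have hab₀' : a₀ ≠ b₀ := hab₀.ne
  have hab₁' : a₀ ≠ b₁ := hab₁.ne
  have hta₀ : t ≠ a₀ := fun h => ht (h ▸ ha₀)
  have hsa₀' : s ≠ a₀ := fun h => hs (h ▸ ha₀)
  -- two-element neighbor filters
  have two_eq : ∀ v ∈ C, ∀ x y : V, x ≠ y → x ∈ C → y ∈ C → G.Adj v x → G.Adj v y →
      C.filter (fun u => G.Adj v u) = {x, y} := by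
    intro v hv x y hxy hx hy hax hay
    refine (Finset.eq_of_subset_of_card_le ?_ ?_).symm
    · intro z hz
      simp only [Finset.mem_insert, Finset.mem_singleton] at hz
      rcases hz with rfl | rfl <;> simp [Finset.mem_filter, *]
    · rw [hdeg v hv, Finset.card_pair hxy]
  have fa : C.filter (fun u => G.Adj a₀ u) = {b₀, b₁} :=
    two_eq a₀ ha₀ b₀ b₁ hbne hb₀ hb₁ hab₀ hab₁
  -- the other neighbor c₀ of b₀ on the cycle
  have hTb₀ : a₀ ∈ C.filter (fun u => G.Adj b₀ u) := Finset.mem_filter.mpr ⟨ha₀, hab₀.symm⟩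
  have h1 : ((C.filter (fun u => G.Adj b₀ u)).erase a₀).card = 1 := by
    rw [Finset.card_erase_of_mem hTb₀, hdeg b₀ hb₀]
  obtain ⟨c₀, hc₀e⟩ := Finset.card_eq_one.mp h1
  have hc₀mem : c₀ ∈ (C.filter (fun u => G.Adj b₀ u)).erase a₀ := by rw [hc₀e]; simp
  have hc₀ne : c₀ ≠ a₀ := (Finset.mem_erase.mp hc₀mem).1
  have hc₀f : c₀ ∈ C.filter (fun u => G.Adj b₀ u) := (Finset.mem_erase.mp hc₀mem).2
  have hc₀C : c₀ ∈ C := (Finset.mem_filter.mp hc₀f).1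
  have hb₀c₀ : G.Adj b₀ c₀ := (Finset.mem_filter.mp hc₀f).2
  have fb₀ : C.filter (fun u => G.Adj b₀ u) = {a₀, c₀} :=
    two_eq b₀ hb₀ a₀ c₀ hc₀ne.symm ha₀ hc₀C hab₀.symm hb₀c₀
  -- the other neighbor c₁ of b₁ on the cycle
  have hTb₁ : a₀ ∈ C.filter (fun u => G.Adj b₁ u) := Finset.mem_filter.mpr ⟨ha₀, hab₁.symm⟩
  have h2 : ((C.filter (fun u => G.Adj b₁ u)).erase a₀).card = 1 := by
    rw [Finset.card_erase_of_mem hTb₁, hdeg b₁ hb₁]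
  obtain ⟨c₁, hc₁e⟩ := Finset.card_eq_one.mp h2
  have hc₁mem : c₁ ∈ (C.filter (fun u => G.Adj b₁ u)).erase a₀ := by rw [hc₁e]; simp
  have hc₁ne : c₁ ≠ a₀ := (Finset.mem_erase.mp hc₁mem).1
  have hc₁f : c₁ ∈ C.filter (fun u => G.Adj b₁ u) := (Finset.mem_erase.mp hc₁mem).2
  have hc₁C : c₁ ∈ C := (Finset.mem_filter.mp hc₁f).1
  have hb₁c₁ : G.Adj b₁ c₁ := (Finset.mem_filter.mp hc₁f).2
  have fb₁ : C.filter (fun u => G.Adj b₁ u) = {a₀, c₁} :=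
    two_eq b₁ hb₁ a₀ c₁ hc₁ne.symm ha₀ hc₁C hab₁.symm hb₁c₁
  -- s-adjacencies
  have hsadj : ∀ x, x ∈ ({b₀, a₀, b₁} : Finset V) → G.Adj s x := by
    intro x hx; rw [← hsnbr] at hx; exact (Finset.mem_filter.mp hx).2
  have hsb₀ : G.Adj s b₀ := hsadj b₀ (by simp)
  have hsa₀ : G.Adj s a₀ := hsadj a₀ (by simp)
  have hsb₁ : G.Adj s b₁ := hsadj b₁ (by simp)
  have hsnot : ∀ x ∈ C, x ∉ ({b₀, a₀, b₁} : Finset V) → ¬ G.Adj s x := by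
    intro x hxC hxn hadj
    refine hxn ?_
    rw [← hsnbr]
    exact Finset.mem_filter.mpr ⟨hxC, hadj⟩
  -- b₀ and b₁ are not adjacent
  have hnbb : ¬ G.Adj b₀ b₁ := by
    intro h
    have hb₁mem : b₁ ∈ ({a₀, c₀} : Finset V) := by
      have := Finset.mem_filter.mpr (⟨hb₁, h⟩ : b₁ ∈ C ∧ G.Adj b₀ b₁)
      rwa [fb₀] at this
    have hbc : b₁ = c₀ := by
      rcases Finset.mem_insert.mp hb₁mem with h' | h'
      · exact absurd h'.symm hab₁'
      · exact Finset.mem_singleton.mp h'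
    subst hbc
    have fb₁' : C.filter (fun u => G.Adj b₁ u) = {a₀, b₀} :=
      two_eq b₁ hb₁ a₀ b₀ hab₀' ha₀ hb₀ hab₁.symm h.symm
    have hsub : C ⊆ {a₀, b₀, b₁} := by
      refine hole_walk_closure G C hconn _ ?_ a₀ ha₀ (by simp)
      intro v hv u hu hadj
      simp only [Finset.mem_insert, Finset.mem_singleton] at hv ⊢
      rcases hv with rfl | rfl | rfl
      · have := Finset.mem_filter.mpr ⟨hu, hadj⟩
        rw [fa] at this
        simp only [Finset.mem_insert, Finset.mem_singleton] at this; tauto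
      · have := Finset.mem_filter.mpr ⟨hu, hadj⟩
        rw [fb₀] at this
        simp only [Finset.mem_insert, Finset.mem_singleton] at this; tauto
      · have := Finset.mem_filter.mpr ⟨hu, hadj⟩
        rw [fb₁'] at this
        simp only [Finset.mem_insert, Finset.mem_singleton] at this; tauto
    have := (Finset.card_le_card hsub).trans (card3_le a₀ b₀ b₁)
    omega
  have hc₀b₁ : c₀ ≠ b₁ := fun h => hnbb (h ▸ hb₀c₀)
  have hc₁b₀ : c₁ ≠ b₀ := fun h => hnbb (h ▸ hb₁c₁).symm
  have hc₀b₀ : c₀ ≠ b₀ := fun h => (hb₀c₀.ne) h.symm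
  have hc₁b₁ : c₁ ≠ b₁ := fun h => (hb₁c₁.ne) h.symm
  -- a₀ not adjacent to c₀, c₁
  have hnac₀ : ¬ G.Adj a₀ c₀ := by
    intro h
    have := Finset.mem_filter.mpr ⟨hc₀C, h⟩
    rw [fa] at this
    simp only [Finset.mem_insert, Finset.mem_singleton] at this
    tauto
  have hnac₁ : ¬ G.Adj a₀ c₁ := by
    intro h
    have := Finset.mem_filter.mpr ⟨hc₁C, h⟩
    rw [fa] at this
    simp only [Finset.mem_insert, Finset.mem_singleton] at this
    tauto
  -- s not adjacent to c₀, c₁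
  have hnsc₀ : ¬ G.Adj s c₀ := hsnot c₀ hc₀C (by simp [hc₀b₀, hc₀ne, hc₀b₁])
  have hnsc₁ : ¬ G.Adj s c₁ := hsnot c₁ hc₁C (by simp [hc₁b₀, hc₁ne, hc₁b₁])
  -- c₀ ≠ c₁
  have hcc : c₀ ≠ c₁ := by
    intro h
    subst h
    have fc₀ : C.filter (fun u => G.Adj c₀ u) = {b₀, b₁} :=
      two_eq c₀ hc₀C b₀ b₁ hbne hb₀ hb₁ hb₀c₀.symm hb₁c₁.symm
    have hsub : C ⊆ {a₀, b₀, b₁, c₀} := by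
      refine hole_walk_closure G C hconn _ ?_ a₀ ha₀ (by simp)
      intro v hv u hu hadj
      simp only [Finset.mem_insert, Finset.mem_singleton] at hv ⊢
      rcases hv with rfl | rfl | rfl | rfl
      · have := Finset.mem_filter.mpr ⟨hu, hadj⟩
        rw [fa] at this
        simp only [Finset.mem_insert, Finset.mem_singleton] at this; tauto
      · have := Finset.mem_filter.mpr ⟨hu, hadj⟩
        rw [fb₀] at this
        simp only [Finset.mem_insert, Finset.mem_singleton] at this; tauto
      · have := Finset.mem_filter.mpr ⟨hu, hadj⟩
        rw [fb₁] at this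
        simp only [Finset.mem_insert, Finset.mem_singleton] at this; tauto
      · have := Finset.mem_filter.mpr ⟨hu, hadj⟩
        rw [fc₀] at this
        simp only [Finset.mem_insert, Finset.mem_singleton] at this; tauto
    have := (Finset.card_le_card hsub).trans (card4_le a₀ b₀ b₁ c₀)
    omega
  -- c₀ not adjacent to c₁
  have hncc : ¬ G.Adj c₀ c₁ := by
    intro h
    have fc₀ : C.filter (fun u => G.Adj c₀ u) = {b₀, c₁} :=
      two_eq c₀ hc₀C b₀ c₁ (Ne.symm hc₁b₀) hb₀ hc₁C hb₀c₀.symm h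
    have fc₁ : C.filter (fun u => G.Adj c₁ u) = {b₁, c₀} :=
      two_eq c₁ hc₁C b₁ c₀ (Ne.symm hc₀b₁) hb₁ hc₀C hb₁c₁.symm h.symm
    have hsub : C ⊆ {a₀, b₀, b₁, c₀, c₁} := by
      refine hole_walk_closure G C hconn _ ?_ a₀ ha₀ (by simp)
      intro v hv u hu hadj
      simp only [Finset.mem_insert, Finset.mem_singleton] at hv ⊢
      rcases hv with rfl | rfl | rfl | rfl | rfl
      · have := Finset.mem_filter.mpr ⟨hu, hadj⟩
        rw [fa] at this
        simp only [Finset.mem_insert, Finset.mem_singleton] at this; tauto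
      · have := Finset.mem_filter.mpr ⟨hu, hadj⟩
        rw [fb₀] at this
        simp only [Finset.mem_insert, Finset.mem_singleton] at this; tauto
      · have := Finset.mem_filter.mpr ⟨hu, hadj⟩
        rw [fb₁] at this
        simp only [Finset.mem_insert, Finset.mem_singleton] at this; tauto
      · have := Finset.mem_filter.mpr ⟨hu, hadj⟩
        rw [fc₀] at this
        simp only [Finset.mem_insert, Finset.mem_singleton] at this; tauto
      · have := Finset.mem_filter.mpr ⟨hu, hadj⟩
        rw [fc₁] at this
        simp only [Finset.mem_insert, Finset.mem_singleton] at this; tauto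
    have := (Finset.card_le_card hsub).trans (card5_le a₀ b₀ b₁ c₀ c₁)
    omega
  have htc₀' : t ≠ c₀ := fun h => ht (h ▸ hc₀C)
  have htc₁' : t ≠ c₁ := fun h => ht (h ▸ hc₁C)
  have hsc₀' : s ≠ c₀ := fun h => hs (h ▸ hc₀C)
  have hsc₁' : s ≠ c₁ := fun h => hs (h ▸ hc₁C)
  -- main case analysis
  rcases hsome with hts' | hta'
  · -- t adjacent to s; show t adjacent to a₀
    refine ⟨hts', ?_⟩
    by_contra hta
    have htc₀ : G.Adj t c₀ := by
      by_contra h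
      exact hcf ⟨b₀, a₀, t, c₀, fun e => hta₀ e.symm, fun e => hc₀ne e.symm, htc₀',
        hab₀.symm, htb₀.symm, hb₀c₀, fun e => hta e.symm, hnac₀, h⟩
    have htc₁ : G.Adj t c₁ := by
      by_contra h
      exact hcf ⟨b₁, a₀, t, c₁, fun e => hta₀ e.symm, fun e => hc₁ne e.symm, htc₁',
        hab₁.symm, htb₁.symm, hb₁c₁, fun e => hta e.symm, hnac₁, h⟩
    exact hcf ⟨t, s, c₀, c₁, hsc₀', hsc₁', hcc,
      hts', htc₀, htc₁, hnsc₀, hnsc₁, hncc⟩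
  · -- t adjacent to a₀; show t adjacent to s
    refine ⟨?_, hta'⟩
    by_contra hts''
    have htc₀ : G.Adj t c₀ := by
      by_contra h
      exact hcf ⟨b₀, s, t, c₀, Ne.symm hts, hsc₀', htc₀',
        hsb₀.symm, htb₀.symm, hb₀c₀, fun e => hts'' e.symm, hnsc₀, h⟩
    have htc₁ : G.Adj t c₁ := by
      by_contra h
      exact hcf ⟨b₁, s, t, c₁, Ne.symm hts, hsc₁', htc₁',
        hsb₁.symm, htb₁.symm, hb₁c₁, fun e => hts'' e.symm, hnsc₁, h⟩
    exact hcf ⟨t, a₀, c₀, c₁, Ne.symm hc₀ne, Ne.symm hc₁ne, hcc,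
      hta', htc₀, htc₁, hnac₀, hnac₁, hncc⟩
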